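/- For any two compact Hausdorff spaces X and Y, the covering dimension of the topological join satisfies dim(X ∗ Y) ≤ 1 + dim(X) + dim(Y). -/

import Mathlib

open unitInterval
open Set

/-- `CovDimLE X n` : the Lebesgue covering dimension of `X` is at most `n`, i.e. every open
cover admits an open shrinking (refinement) of order at most `n + 1`. -/
def CovDimLE (X : Type*) [TopologicalSpace X] (n : ℕ) : Prop :=
  ∀ (ι : Type) (U : ι → Set X), (∀ i, IsOpen (U i)) → (⋃ i, U i) = Set.univ →
    ∃ V : ι → Set X, (∀ i, IsOpen (V i)) ∧ (∀ i, V i ⊆ U i) ∧ (⋃ i, V i) = Set.univ ∧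
      ∀ x : X, {i | x ∈ V i}.Finite ∧ {i | x ∈ V i}.ncard ≤ n + 1

/-- The relation generating the join identifications: `(0,x,y) ∼ (0,x',y)` and
`(1,x,y) ∼ (1,x,y')`. -/
def JoinRel (X Y : Type*) : (I × X × Y) → (I × X × Y) → Prop := fun p q =>
  (p.1 = 0 ∧ q.1 = 0 ∧ p.2.2 = q.2.2) ∨ (p.1 = 1 ∧ q.1 = 1 ∧ p.2.1 = q.2.1)

/-- The topological join `X ∗ Y`, the quotient of `[0,1] × X × Y` by the above relation. -/
def Join (X Y : Type*) [TopologicalSpace X] [TopologicalSpace Y] : Type _ :=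
  Quot (JoinRel X Y)

instance (X Y : Type*) [TopologicalSpace X] [TopologicalSpace Y] :
    TopologicalSpace (Join X Y) :=
  inferInstanceAs (TopologicalSpace (Quot (JoinRel X Y)))

set_option linter.unusedSectionVars false

theorem ostrand {Z : Type*} [TopologicalSpace Z] [CompactSpace Z] [T2Space Z]
    {m : ℕ} (hZ : CovDimLE Z m) (ι : Type) [Nonempty ι] (U : ι → Set Z)
    (hUo : ∀ i, IsOpen (U i)) (hUc : (⋃ i, U i) = Set.univ) (k : ℕ) :
    ∃ (W : Fin k → Set ι → Set Z) (asg : Fin k → Set ι → ι),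
      (∀ c S, IsOpen (W c S)) ∧
      (∀ c S, W c S ⊆ U (asg c S)) ∧
      (∀ c S S', S ≠ S' → Disjoint (W c S) (W c S')) ∧
      (∀ x : Z, ({c : Fin k | ∀ S, x ∉ W c S}).ncard ≤ m) := by
  classical
  obtain ⟨V, hVo, hVU, hVc, hVord⟩ := hZ ι U hUo hUc
  obtain ⟨f, hf⟩ := PartitionOfUnity.exists_isSubordinate isClosed_univ V hVo
    (by rw [hVc])
  set ε : ℝ := 1 / ((3 * k + 3) * (m + 1)) with hε
  have hεpos : 0 < ε := by positivity
  set a : Fin k → ℝ := fun c => (3 * (c : ℕ) + 2) * ε with ha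
  set b : Fin k → ℝ := fun c => (3 * (c : ℕ) + 1) * ε with hb
  have hba : ∀ c, b c < a c := by
    intro c
    have : (3 * (c : ℕ) + 1 : ℝ) < 3 * (c : ℕ) + 2 := by norm_num
    exact mul_lt_mul_of_pos_right this hεpos
  have hbpos : ∀ c, 0 < b c := by
    intro c; positivity
  have haux : ∀ c : Fin k, (3 * (c : ℕ) + 2 : ℝ) < (3 * k + 3 : ℝ) := by
    intro c
    have := c.2
    push_cast
    have : ((c : ℕ) : ℝ) < k := by exact_mod_cast this
    linarith
  have hasmall : ∀ c, a c < 1 / (m + 1) := by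
    intro c
    have h1 : a c < (3 * k + 3) * ε := mul_lt_mul_of_pos_right (haux c) hεpos
    have h2 : ((3 * k + 3 : ℝ)) * ε = 1 / (m + 1) := by
      rw [hε]; field_simp
    linarith [h1, h2.le]
  -- gaps disjoint
  have hgap : ∀ c c' : Fin k, c ≠ c' → ∀ t : ℝ,
      t ∈ Icc (b c) (a c) → t ∉ Icc (b c') (a c') := by
    intro c c' hne t ht ht'
    rcases lt_or_gt_of_ne (fun h : (c : ℕ) = (c' : ℕ) => hne (Fin.ext h)) with h | h
    · have : a c < b c' := by
        have : (3 * (c : ℕ) + 2 : ℝ) < 3 * (c' : ℕ) + 1 := by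
          have : (c : ℕ) + 1 ≤ c' := h
          have : ((c : ℕ) : ℝ) + 1 ≤ (c' : ℕ) := by exact_mod_cast this
          linarith
        exact mul_lt_mul_of_pos_right this hεpos
      linarith [ht.2, ht'.1]
    · have : a c' < b c := by
        have : (3 * (c' : ℕ) + 2 : ℝ) < 3 * (c : ℕ) + 1 := by
          have : (c' : ℕ) + 1 ≤ c := h
          have : ((c' : ℕ) : ℝ) + 1 ≤ (c : ℕ) := by exact_mod_cast this
          linarith
        exact mul_lt_mul_of_pos_right this hεpos
      linarith [ht.1, ht'.2]
  -- pointwise facts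
  have hsupp : ∀ x i, f i x ≠ 0 → x ∈ V i := by
    intro x i hne
    exact hf i (subset_tsupport _ hne)
  have hsum : ∀ x : Z, ∑ᶠ i, f i x = 1 := fun x => f.sum_eq_one (mem_univ x)
  have hmax : ∀ x : Z, ∃ i, 1 / (m + 1 : ℝ) ≤ f i x := by
    intro x
    by_contra hcon
    push_neg at hcon
    have hfin : {i | x ∈ V i}.Finite := (hVord x).1
    have hsub : Function.support (fun i => f i x) ⊆ (hfin.toFinset : Set ι) := by
      intro i hi
      simp only [Finite.coe_toFinset, mem_setOf_eq]
      exact hsupp x i hi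
    have hsumeq : ∑ i ∈ hfin.toFinset, f i x = 1 := by
      rw [← finsum_eq_sum_of_support_subset _ hsub]; exact hsum x
    have hcard : hfin.toFinset.card ≤ m + 1 := by
      have h2 := (hVord x).2
      rwa [Set.ncard_eq_toFinset_card _ hfin] at h2
    have hne : hfin.toFinset.Nonempty := by
      rcases Finset.eq_empty_or_nonempty hfin.toFinset with h | h
      · exfalso
        rw [h, Finset.sum_empty] at hsumeq
        norm_num at hsumeq
      · exact h
    have hlt : ∑ i ∈ hfin.toFinset, f i x < ∑ _i ∈ hfin.toFinset, (1 / (m + 1 : ℝ)) :=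
      Finset.sum_lt_sum_of_nonempty hne (fun i _ => hcon i)
    rw [Finset.sum_const, nsmul_eq_mul] at hlt
    have hle : (hfin.toFinset.card : ℝ) * (1 / (m + 1)) ≤ (m + 1 : ℝ) * (1 / (m + 1)) := by
      apply mul_le_mul_of_nonneg_right _ (by positivity)
      exact_mod_cast hcard
    have : (m + 1 : ℝ) * (1 / (m + 1)) = 1 := by field_simp
    rw [hsumeq] at hlt
    linarith
  -- the colored families
  set W : Fin k → Set ι → Set Z :=
    fun c S => {x | (∀ i ∈ S, a c < f i x) ∧ (∀ i ∉ S, f i x < b c)} with hW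
  have hWsub : ∀ c S i, i ∈ S → W c S ⊆ V i := by
    intro c S i hi x hx
    have : 0 < f i x := lt_trans (lt_trans (hbpos c) (hba c)) (hx.1 i hi)
    exact hsupp x i (ne_of_gt this)
  have hWempty : ∀ c, W c ∅ = ∅ := by
    intro c
    ext x
    simp only [hW, mem_setOf_eq, mem_empty_iff_false, iff_false, not_and]
    intro _ h
    obtain ⟨i, hi⟩ := hmax x
    have := h i (by simp)
    have := hasmall c
    have := hba c
    linarith
  refine ⟨W, fun c S => if h : S.Nonempty then h.choose else Classical.arbitrary ι,
    ?_, ?_, ?_, ?_⟩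
  · -- openness
    intro c S
    rw [isOpen_iff_mem_nhds]
    intro x hx
    obtain ⟨N, hN, hNfin⟩ := f.locallyFinite x
    obtain ⟨O, hON, hOopen, hxO⟩ := mem_nhds_iff.1 hN
    have hSsub : S ⊆ {i | (Function.support (f i) ∩ N).Nonempty} := by
      intro i hi
      refine ⟨x, ?_, mem_of_mem_nhds hN⟩
      have : 0 < f i x := lt_trans (lt_trans (hbpos c) (hba c)) (hx.1 i hi)
      exact ne_of_gt this
    have hSfin : S.Finite := hNfin.subset hSsub
    have hFfin : {i | (Function.support (f i) ∩ N).Nonempty}.Finite := hNfin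
    set G : Set Z := O ∩ (⋂ i ∈ hSfin.toFinset, {z | a c < f i z}) ∩
      (⋂ i ∈ (hFfin.toFinset \ hSfin.toFinset), {z | f i z < b c}) with hG
    have hGopen : IsOpen G := by
      apply IsOpen.inter
      apply IsOpen.inter hOopen
      · exact isOpen_biInter_finset (fun i _ => isOpen_lt continuous_const (f i).continuous)
      · exact isOpen_biInter_finset (fun i _ => isOpen_lt (f i).continuous continuous_const)
    have hxG : x ∈ G := by
      refine ⟨⟨hxO, ?_⟩, ?_⟩
      · simp only [mem_iInter]
        intro i hi
        exact hx.1 i (by simpa using hi)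
      · simp only [mem_iInter]
        intro i hi
        simp only [Finset.mem_sdiff, Set.Finite.mem_toFinset] at hi
        exact hx.2 i hi.2
    refine Filter.mem_of_superset (hGopen.mem_nhds hxG) ?_
    intro z hz
    obtain ⟨⟨hzO, hz1⟩, hz2⟩ := hz
    simp only [mem_iInter] at hz1 hz2
    constructor
    · intro i hi
      exact hz1 i (by simpa using hi)
    · intro i hi
      by_cases hiF : i ∈ hFfin.toFinset
      · exact hz2 i (by simp only [Finset.mem_sdiff]; exact ⟨hiF, by simpa using hi⟩)
      · have : f i z = 0 := by
          by_contra hne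
          exact hiF (by
            simp only [Set.Finite.mem_toFinset]
            exact ⟨z, hne, hON hzO⟩)
        rw [this]
        exact hbpos c
  · -- containment
    intro c S
    by_cases h : S.Nonempty
    · simp only [dif_pos h]
      exact (hWsub c S _ h.choose_spec).trans (hVU _)
    · rw [Set.not_nonempty_iff_eq_empty] at h
      subst h
      rw [hWempty]
      exact empty_subset _
  · -- disjointness
    intro c S S' hne
    rw [Set.disjoint_left]
    intro x hxS hxS'
    have : ¬ (∀ i, i ∈ S ↔ i ∈ S') := fun h => hne (Set.ext h)
    push_neg at this
    obtain ⟨i, hi⟩ := this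
    rcases hi with ⟨hiS, hiS'⟩ | ⟨hiS, hiS'⟩
    · have h1 := hxS.1 i hiS
      have h2 := hxS'.2 i hiS'
      have := hba c
      linarith
    · have h1 := hxS'.1 i hiS'
      have h2 := hxS.2 i hiS
      have := hba c
      linarith
  · -- defect bound
    intro x
    set M : Set (Fin k) := {c | ∀ S, x ∉ W c S} with hM
    have hkey : ∀ c ∈ M, ∃ i, f i x ∈ Icc (b c) (a c) := by
      intro c hc
      by_contra hcon
      push_neg at hcon
      apply hc {i | a c < f i x}
      constructor
      · intro i hi; exact hi
      · intro i hi
        simp only [mem_setOf_eq, not_lt] at hi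
        rcases lt_or_ge (f i x) (b c) with h | h
        · exact h
        · exact absurd ⟨h, hi⟩ (hcon i)
    choose g hg using hkey
    obtain ⟨imax, himax⟩ := hmax x
    have hPfin : {i | x ∈ V i}.Finite := (hVord x).1
    have himaxV : imax ∈ {i | x ∈ V i} := by
      apply hsupp
      have : (0:ℝ) < 1 / (m+1) := by positivity
      linarith
    have hmaps : ∀ c (hc : c ∈ M), g c hc ∈ {i | x ∈ V i} \ {imax} := by
      intro c hc
      constructor
      · apply hsupp
        have h1 := (hg c hc).1
        have h2 := hbpos c
        intro h0
        rw [h0] at h1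
        linarith
      · simp only [mem_singleton_iff]
        intro heq
        have h1 := (hg c hc).2
        rw [heq] at h1
        have := hasmall c
        linarith
    -- injectivity
    have hMfin : M.Finite := Set.toFinite M
    have : M.ncard ≤ ({i | x ∈ V i} \ {imax}).ncard := by
      have hex : ∀ c ∈ M, ∃ i, i ∈ {i | x ∈ V i} \ {imax} ∧ f i x ∈ Icc (b c) (a c) := by
        intro c hc
        exact ⟨g c hc, hmaps c hc, hg c hc⟩
      choose g' hg'1 hg'2 using hex
      refine Set.ncard_le_ncard_of_injOn
        (fun c => if hc : c ∈ M then g' c hc else Classical.arbitrary ι) ?_ ?_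
        (hPfin.subset diff_subset)
      · intro c hc
        simp only [dif_pos hc]
        exact hg'1 c hc
      · intro c hc c' hc' heq
        simp only [dif_pos hc, dif_pos hc'] at heq
        by_contra hne
        exact hgap c c' hne _ (hg'2 c hc) (heq ▸ hg'2 c' hc')
    refine le_trans this ?_
    have h1 : ({i | x ∈ V i} \ {imax}).ncard < {i | x ∈ V i}.ncard :=
      Set.ncard_diff_singleton_lt_of_mem himaxV hPfin
    have h2 := (hVord x).2
    omega


section JoinAux

variable {X Y : Type*} [TopologicalSpace X] [TopologicalSpace Y]

/-- The quotient map onto the join. -/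
def jq : I × X × Y → Join X Y := Quot.mk _

lemma jq_continuous : Continuous (jq : I × X × Y → Join X Y) := continuous_quot_mk

lemma jq_surjective : Function.Surjective (jq : I × X × Y → Join X Y) :=
  Quot.exists_rep

/-- Saturated sets: membership is invariant under the generating relation. -/
def JSat (sg : Set (I × X × Y)) : Prop :=
  ∀ p q, JoinRel X Y p q → (p ∈ sg ↔ q ∈ sg)

lemma JSat.eqvGen {sg : Set (I × X × Y)} (hsg : JSat sg) {p q}
    (h : Relation.EqvGen (JoinRel X Y) p q) : p ∈ sg ↔ q ∈ sg := by
  induction h with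
  | rel a b hab => exact hsg a b hab
  | refl a => exact Iff.rfl
  | symm a b _ ih => exact ih.symm
  | trans a b c _ _ ih1 ih2 => exact ih1.trans ih2

lemma JSat.mem_image_iff {sg : Set (I × X × Y)} (hsg : JSat sg) {p} :
    jq p ∈ jq '' sg ↔ p ∈ sg := by
  constructor
  · rintro ⟨w, hw, heq⟩
    exact (hsg.eqvGen (Quot.eq.1 heq)).1 hw
  · exact fun h => mem_image_of_mem _ h

lemma JSat.isOpen_image {sg : Set (I × X × Y)} (hsg : JSat sg) (ho : IsOpen sg) :
    IsOpen (jq '' sg) := by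
  refine (isOpen_coinduced (f := jq)).2 ?_
  have : jq ⁻¹' (jq '' sg) = sg := by
    ext p
    exact hsg.mem_image_iff
  rwa [this]

lemma JSat.iUnion {κ : Sort*} {sg : κ → Set (I × X × Y)} (h : ∀ i, JSat (sg i)) :
    JSat (⋃ i, sg i) := by
  intro p q hpq
  simp only [mem_iUnion]
  exact exists_congr fun i => h i p q hpq

instance [CompactSpace X] [CompactSpace Y] : CompactSpace (Join X Y) := by
  constructor
  have : (univ : Set (Join X Y)) = jq '' univ := by
    rw [Set.image_univ, (jq_surjective).range_eq]
  rw [this]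
  exact isCompact_univ.image jq_continuous

/-- rectangular neighborhoods in the triple product -/
lemma rect_nbhd {W : Set (I × X × Y)} (hW : IsOpen W) {p : I × X × Y} (hp : p ∈ W) :
    ∃ ε > 0, ∃ A B, IsOpen A ∧ IsOpen B ∧ p.2.1 ∈ A ∧ p.2.2 ∈ B ∧
      {q : I × X × Y | dist q.1 p.1 < ε ∧ q.2.1 ∈ A ∧ q.2.2 ∈ B} ⊆ W := by
  obtain ⟨u, v, hu, hv, hpu, hpv, huv⟩ := isOpen_prod_iff.1 hW p.1 p.2 hp
  obtain ⟨A, B, hA, hB, hpA, hpB, hAB⟩ := isOpen_prod_iff.1 hv p.2.1 p.2.2 hpv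
  obtain ⟨ε, hε, hball⟩ := Metric.isOpen_iff.1 hu p.1 hpu
  refine ⟨ε, hε, A, B, hA, hB, hpA, hpB, ?_⟩
  rintro ⟨t, x, y⟩ ⟨h1, h2, h3⟩
  exact huv (⟨hball h1, hAB ⟨h2, h3⟩⟩ : (t, (x,y)) ∈ u ×ˢ v)


lemma dist_I_zero (t : I) : dist t (0 : I) = (t : ℝ) := by
  rw [Subtype.dist_eq]
  simp [Real.dist_eq, abs_of_nonneg t.2.1]

lemma dist_I_one (t : I) : dist t (1 : I) = 1 - (t : ℝ) := by
  rw [Subtype.dist_eq]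
  rw [Real.dist_eq, abs_of_nonpos (by simpa using t.2.2)]
  simp

lemma e0_tube [CompactSpace X] {O : Set (I × X × Y)} (hO : IsOpen O) {y : Y}
    (h : ∀ x, ((0 : I), x, y) ∈ O) :
    ∃ δ > 0, ∃ B, IsOpen B ∧ y ∈ B ∧
      {p : I × X × Y | (p.1 : ℝ) < δ ∧ p.2.2 ∈ B} ⊆ O := by
  have hsub : ({(0 : I)} : Set I) ×ˢ ((univ : Set X) ×ˢ ({y} : Set Y)) ⊆ O := by
    rintro ⟨t, x, y'⟩ ⟨ht, -, hy⟩
    simp only [mem_singleton_iff] at ht hy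
    subst ht; subst hy
    exact h x
  obtain ⟨u, v, hu, hv, h0u, hXv, huv⟩ :=
    generalized_tube_lemma isCompact_singleton
      (isCompact_univ.prod isCompact_singleton) hO hsub
  obtain ⟨u2, v2, hu2, hv2, hXu2, hyv2, hu2v2⟩ :=
    generalized_tube_lemma isCompact_univ isCompact_singleton hv hXv
  obtain ⟨δ, hδ, hball⟩ := Metric.isOpen_iff.1 hu 0 (h0u rfl)
  refine ⟨δ, hδ, v2, hv2, hyv2 rfl, ?_⟩
  rintro ⟨t, x, y'⟩ ⟨h1, h2⟩
  apply huv
  refine ⟨hball ?_, hu2v2 ⟨hXu2 (mem_univ x), h2⟩⟩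
  rw [Metric.mem_ball, dist_I_zero]
  exact h1

lemma e1_tube [CompactSpace Y] {O : Set (I × X × Y)} (hO : IsOpen O) {x : X}
    (h : ∀ y, ((1 : I), x, y) ∈ O) :
    ∃ δ > 0, ∃ A, IsOpen A ∧ x ∈ A ∧
      {p : I × X × Y | 1 - δ < (p.1 : ℝ) ∧ p.2.1 ∈ A} ⊆ O := by
  have hsub : ({(1 : I)} : Set I) ×ˢ (({x} : Set X) ×ˢ (univ : Set Y)) ⊆ O := by
    rintro ⟨t, x', y⟩ ⟨ht, hx, -⟩
    simp only [mem_singleton_iff] at ht hx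
    subst ht; subst hx
    exact h y
  obtain ⟨u, v, hu, hv, h1u, hXv, huv⟩ :=
    generalized_tube_lemma isCompact_singleton
      (isCompact_singleton.prod isCompact_univ) hO hsub
  obtain ⟨u2, v2, hu2, hv2, hxu2, hYv2, hu2v2⟩ :=
    generalized_tube_lemma isCompact_singleton isCompact_univ hv hXv
  obtain ⟨δ, hδ, hball⟩ := Metric.isOpen_iff.1 hu 1 (h1u rfl)
  refine ⟨δ, hδ, u2, hu2, hxu2 rfl, ?_⟩
  rintro ⟨t, x', y⟩ ⟨h1, h2⟩
  apply huv
  refine ⟨hball ?_, hu2v2 ⟨h2, hYv2 (mem_univ y)⟩⟩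
  rw [Metric.mem_ball, dist_I_one]
  linarith

end JoinAux
set_option maxHeartbeats 2000000 in
/-- For compact Hausdorff spaces `X` and `Y`, `dim(X ∗ Y) ≤ 1 + dim(X) + dim(Y)`. -/
theorem covDim_join_le (X Y : Type*)
    [TopologicalSpace X] [CompactSpace X] [T2Space X]
    [TopologicalSpace Y] [CompactSpace Y] [T2Space Y]
    (m n : ℕ) (hX : CovDimLE X m) (hY : CovDimLE Y n) :
    CovDimLE (Join X Y) (1 + m + n) := by
  classical
  intro ι U hUo hUc
  -- degenerate cases
  by_cases hXe : IsEmpty X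
  · haveI : IsEmpty (Join X Y) := by
      constructor
      intro z
      induction z using Quot.ind with
      | _ ρ => exact (hXe.false ρ.2.1).elim
    exact ⟨U, hUo, fun i => subset_rfl, hUc, fun z => isEmptyElim z⟩
  by_cases hYe : IsEmpty Y
  · haveI : IsEmpty (Join X Y) := by
      constructor
      intro z
      induction z using Quot.ind with
      | _ ρ => exact (hYe.false ρ.2.2).elim
    exact ⟨U, hUo, fun i => subset_rfl, hUc, fun z => isEmptyElim z⟩
  rw [not_isEmpty_iff] at hXe hYe
  obtain ⟨x0⟩ := hXe
  obtain ⟨y0⟩ := hYe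
  haveI : Nonempty ι := by
    have : jq ((0 : I), x0, y0) ∈ ⋃ u, U u := by rw [hUc]; trivial
    obtain ⟨u, -⟩ := mem_iUnion.1 this
    exact ⟨u⟩
  set k := m + n + 2 with hk
  set O : ι → Set (I × X × Y) := fun u => jq ⁻¹' U u with hO
  have hOo : ∀ u, IsOpen (O u) := fun u => (hUo u).preimage jq_continuous
  have hcov : ∀ p : I × X × Y, ∃ u, p ∈ O u := by
    intro p
    have : jq p ∈ ⋃ u, U u := by rw [hUc]; trivial
    obtain ⟨u, hu⟩ := mem_iUnion.1 this
    exact ⟨u, hu⟩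
  -- ===== E0 tubes =====
  have hE0 : ∀ y : Y, ∃ u, ∃ δ > (0:ℝ), ∃ B, IsOpen B ∧ y ∈ B ∧
      {p : I × X × Y | (p.1 : ℝ) < δ ∧ p.2.2 ∈ B} ⊆ O u := by
    intro y
    obtain ⟨u, hu⟩ := hcov (0, x0, y)
    have hfib : ∀ x : X, ((0:I), x, y) ∈ O u := by
      intro x
      have : jq ((0:I), x, y) = jq ((0:I), x0, y) :=
        Quot.sound (Or.inl ⟨rfl, rfl, rfl⟩)
      simpa [hO, Set.mem_preimage, this] using hu
    obtain ⟨δ, hδ, B, hBo, hBm, hBt⟩ := e0_tube (hOo u) hfib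
    exact ⟨u, δ, hδ, B, hBo, hBm, hBt⟩
  choose uE0 δE0 hδE0 B0 hB0o hB0m hB0t using hE0
  obtain ⟨FY, hFY⟩ := isCompact_univ.elim_finite_subcover B0 hB0o
    (fun y _ => mem_iUnion.2 ⟨y, hB0m y⟩)
  have hFYne : FY.Nonempty := by
    obtain ⟨y, hy, -⟩ := mem_iUnion₂.1 (hFY (mem_univ y0))
    exact ⟨y, hy⟩
  set nP := FY.card with hnP
  set eP : Fin nP → Y := fun i => (FY.equivFin.symm i : Y) with heP
  set Bp : Fin nP → Set Y := fun i => B0 (eP i) with hBp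
  have hBpcov : ∀ y : Y, ∃ i, y ∈ Bp i := by
    intro y
    obtain ⟨y', hy', hmem⟩ := mem_iUnion₂.1 (hFY (mem_univ y))
    refine ⟨FY.equivFin ⟨y', hy'⟩, ?_⟩
    simpa [hBp, heP] using hmem
  set δ0 : ℝ := min (1/4) ((FY.image δE0).min' (hFYne.image _)) with hδ0
  have hδ0pos : 0 < δ0 := by
    rcases Finset.mem_image.1 ((FY.image δE0).min'_mem (hFYne.image _)) with ⟨y, -, hy⟩
    rw [hδ0]
    apply lt_min (by norm_num)
    rw [← hy]; exact hδE0 y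
  have hδ0le : ∀ i : Fin nP, δ0 ≤ δE0 (eP i) := by
    intro i
    refine le_trans (min_le_right _ _) (Finset.min'_le _ _ ?_)
    exact Finset.mem_image_of_mem _ (by simp [heP])
  have hδ0q : δ0 ≤ 1/4 := min_le_left _ _
  -- ===== E1 tubes =====
  have hE1 : ∀ x : X, ∃ u, ∃ δ > (0:ℝ), ∃ A, IsOpen A ∧ x ∈ A ∧
      {p : I × X × Y | 1 - δ < (p.1 : ℝ) ∧ p.2.1 ∈ A} ⊆ O u := by
    intro x
    obtain ⟨u, hu⟩ := hcov (1, x, y0)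
    have hfib : ∀ y : Y, ((1:I), x, y) ∈ O u := by
      intro y
      have : jq ((1:I), x, y) = jq ((1:I), x, y0) :=
        Quot.sound (Or.inr ⟨rfl, rfl, rfl⟩)
      simpa [hO, Set.mem_preimage, this] using hu
    obtain ⟨δ, hδ, A, hAo, hAm, hAt⟩ := e1_tube (hOo u) hfib
    exact ⟨u, δ, hδ, A, hAo, hAm, hAt⟩
  choose uE1 δE1 hδE1 A1 hA1o hA1m hA1t using hE1
  obtain ⟨FX, hFX⟩ := isCompact_univ.elim_finite_subcover A1 hA1o
    (fun x _ => mem_iUnion.2 ⟨x, hA1m x⟩)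
  have hFXne : FX.Nonempty := by
    obtain ⟨x, hx, -⟩ := mem_iUnion₂.1 (hFX (mem_univ x0))
    exact ⟨x, hx⟩
  set nR := FX.card with hnR
  set eR : Fin nR → X := fun i => (FX.equivFin.symm i : X) with heR
  set Ar : Fin nR → Set X := fun i => A1 (eR i) with hAr
  have hArcov : ∀ x : X, ∃ i, x ∈ Ar i := by
    intro x
    obtain ⟨x', hx', hmem⟩ := mem_iUnion₂.1 (hFX (mem_univ x))
    refine ⟨FX.equivFin ⟨x', hx'⟩, ?_⟩
    simpa [hAr, heR] using hmem
  set δ1 : ℝ := min (1/4) ((FX.image δE1).min' (hFXne.image _)) with hδ1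
  have hδ1pos : 0 < δ1 := by
    rcases Finset.mem_image.1 ((FX.image δE1).min'_mem (hFXne.image _)) with ⟨x, -, hx⟩
    rw [hδ1]
    apply lt_min (by norm_num)
    rw [← hx]; exact hδE1 x
  have hδ1le : ∀ i : Fin nR, δ1 ≤ δE1 (eR i) := by
    intro i
    refine le_trans (min_le_right _ _) (Finset.min'_le _ _ ?_)
    exact Finset.mem_image_of_mem _ (by simp [heR])
  have hδ1q : δ1 ≤ 1/4 := min_le_left _ _
    -- ===== middle slice data =====
  have hrect2 : ∀ (x : X) (τ : I) (y : Y), ∃ u, ∃ ε > (0:ℝ), ∃ A B,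
      IsOpen A ∧ IsOpen B ∧ x ∈ A ∧ y ∈ B ∧
      {q : I × X × Y | dist q.1 τ < ε ∧ q.2.1 ∈ A ∧ q.2.2 ∈ B} ⊆ O u := by
    intro x τ y
    obtain ⟨u, hu⟩ := hcov (τ, x, y)
    obtain ⟨ε, hε, A, B, hA, hB, hxA, hyB, hsub⟩ := rect_nbhd (hOo u) hu
    exact ⟨u, ε, hε, A, B, hA, hB, hxA, hyB, hsub⟩
  choose ur εr hεr Asr Br hAro hBro hArm hBrm hrt using hrect2
  -- for fixed (x,τ): cover Y by finitely many Br x τ y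
  have hsl2 : ∀ (x : X) (τ : I), ∃ G : Finset Y,
      (univ : Set Y) ⊆ ⋃ y ∈ G, Br x τ y :=
    fun x τ => isCompact_univ.elim_finite_subcover (Br x τ) (hBro x τ)
      (fun y _ => mem_iUnion.2 ⟨y, hBrm x τ y⟩)
  choose GY hGY using hsl2
  have hGYne : ∀ x τ, (GY x τ).Nonempty := by
    intro x τ
    obtain ⟨y, hy, -⟩ := mem_iUnion₂.1 (hGY x τ (mem_univ y0))
    exact ⟨y, hy⟩
  set εs : X → I → ℝ := fun x τ => ((GY x τ).image (εr x τ)).min' ((hGYne x τ).image _)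
    with hεs
  have hεspos : ∀ x τ, 0 < εs x τ := by
    intro x τ
    rcases Finset.mem_image.1 (((GY x τ).image (εr x τ)).min'_mem ((hGYne x τ).image _))
      with ⟨y, -, hy⟩
    rw [hεs]
    simp only []
    rw [← hy]
    exact hεr x τ y
  have hεsle : ∀ x τ y, y ∈ GY x τ → εs x τ ≤ εr x τ y :=
    fun x τ y hy => Finset.min'_le _ _ (Finset.mem_image_of_mem _ hy)
  set As : X → I → Set X := fun x τ => ⋂ y ∈ GY x τ, Asr x τ y with hAs
  have hAso : ∀ x τ, IsOpen (As x τ) :=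
    fun x τ => isOpen_biInter_finset (fun y _ => hAro x τ y)
  have hAsm : ∀ x τ, x ∈ As x τ := by
    intro x τ
    simp only [hAs, mem_iInter]
    intro y _
    exact hArm x τ y
  have htube2 : ∀ x τ y, y ∈ GY x τ →
      {q : I × X × Y | dist q.1 τ < εs x τ ∧ q.2.1 ∈ As x τ ∧ q.2.2 ∈ Br x τ y}
        ⊆ O (ur x τ y) := by
    intro x τ y hy q hq
    refine hrt x τ y ⟨lt_of_lt_of_le hq.1 (hεsle x τ y hy), ?_, hq.2.2⟩
    have := hq.2.1
    simp only [hAs, mem_iInter] at this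
    exact this y hy
  -- the middle zone
  set Zz : Set I := (fun t : I => (t : ℝ)) ⁻¹' (Icc (δ0/2) (1 - δ1/2)) with hZz
  have hZzc : IsCompact Zz :=
    (IsClosed.preimage continuous_subtype_val isClosed_Icc).isCompact
  have hZcov : ∀ x : X, ∃ T : Finset I,
      Zz ⊆ ⋃ τ ∈ T, Metric.ball τ (εs x τ / 2) := by
    intro x
    apply hZzc.elim_finite_subcover (fun τ : I => Metric.ball τ (εs x τ / 2))
      (fun τ => Metric.isOpen_ball)
    intro t _
    refine mem_iUnion.2 ⟨t, ?_⟩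
    rw [Metric.mem_ball, dist_self]
    have := hεspos x t
    linarith
  choose Tf hTf using hZcov
  have hZzne : ∃ t : I, t ∈ Zz := by
    have h01 : (0:ℝ) ≤ δ0/2 := by linarith
    have h02 : δ0/2 ≤ 1 := by linarith
    refine ⟨⟨δ0/2, h01, h02⟩, ?_⟩
    simp only [hZz, mem_preimage, mem_Icc]
    constructor
    · norm_num
    · linarith
  have hTfne : ∀ x, (Tf x).Nonempty := by
    intro x
    obtain ⟨t, ht⟩ := hZzne
    obtain ⟨τ, hτ, -⟩ := mem_iUnion₂.1 (hTf x ht)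
    exact ⟨τ, hτ⟩
  set Nx : X → Set X := fun x => ⋂ τ ∈ Tf x, As x τ with hNx
  have hNxo : ∀ x, IsOpen (Nx x) :=
    fun x => isOpen_biInter_finset (fun τ _ => hAso x τ)
  have hNxm : ∀ x, x ∈ Nx x := by
    intro x
    simp only [hNx, mem_iInter]
    intro τ _
    exact hAsm x τ
  obtain ⟨FX2, hFX2⟩ := isCompact_univ.elim_finite_subcover Nx hNxo
    (fun x _ => mem_iUnion.2 ⟨x, hNxm x⟩)
  have hFX2ne : FX2.Nonempty := by
    obtain ⟨x, hx, -⟩ := mem_iUnion₂.1 (hFX2 (mem_univ x0))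
    exact ⟨x, hx⟩
  set nX := FX2.card with hnX
  set xI : Fin nX → X := fun i => (FX2.equivFin.symm i : X) with hxI
  have hNxcov : ∀ x : X, ∃ i : Fin nX, x ∈ Nx (xI i) := by
    intro x
    obtain ⟨x', hx', hmem⟩ := mem_iUnion₂.1 (hFX2 (mem_univ x))
    refine ⟨FX2.equivFin ⟨x', hx'⟩, ?_⟩
    simpa [hxI] using hmem
  -- enumerate Tf (xI i) and GY
  set nT : Fin nX → ℕ := fun i => (Tf (xI i)).card with hnT
  set τI : (i : Fin nX) → Fin (nT i) → I :=
    fun i t => ((Tf (xI i)).equivFin.symm t : I) with hτI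
  have hτImem : ∀ i t, τI i t ∈ Tf (xI i) := fun i t => ((Tf (xI i)).equivFin.symm t).2
  set nB : (i : Fin nX) → Fin (nT i) → ℕ := fun i t => (GY (xI i) (τI i t)).card with hnB
  set yB : (i : Fin nX) → (t : Fin (nT i)) → Fin (nB i t) → Y :=
    fun i t j => ((GY (xI i) (τI i t)).equivFin.symm j : Y) with hyB
  have hyBmem : ∀ i t j, yB i t j ∈ GY (xI i) (τI i t) :=
    fun i t j => ((GY (xI i) (τI i t)).equivFin.symm j).2
    -- reindexed slice coverage
  have hTcov : ∀ (i : Fin nX) (τ' : I), τ' ∈ Zz → ∃ t : Fin (nT i),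
      dist τ' (τI i t) < εs (xI i) (τI i t) / 2 := by
    intro i τ' hτ'
    obtain ⟨τ, hτmem, hball⟩ := mem_iUnion₂.1 (hTf (xI i) hτ')
    refine ⟨(Tf (xI i)).equivFin ⟨τ, hτmem⟩, ?_⟩
    simpa [hτI, Metric.mem_ball] using hball
  -- ===== colorings =====
  -- X side
  haveI : Nonempty (Fin nR) := ⟨⟨0, Finset.card_pos.2 hFXne⟩⟩
  haveI : Nonempty (Fin nP) := ⟨⟨0, Finset.card_pos.2 hFYne⟩⟩
  haveI : Nonempty (Fin nX) := ⟨⟨0, Finset.card_pos.2 hFX2ne⟩⟩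
  haveI hNEnT : ∀ i : Fin nX, Nonempty (Fin (nT i)) :=
    fun i => ⟨⟨0, Finset.card_pos.2 (hTfne (xI i))⟩⟩
  haveI hNEnB : ∀ (i : Fin nX) (t : Fin (nT i)), Nonempty (Fin (nB i t)) :=
    fun i t => ⟨⟨0, Finset.card_pos.2 (hGYne (xI i) (τI i t))⟩⟩
  set XI := (Fin nR × Fin nX) with hXI
  set CX : XI → Set X := fun ri => Ar ri.1 ∩ Nx (xI ri.2) with hCX
  have hCXo : ∀ ri, IsOpen (CX ri) := by
    rintro ⟨r, i⟩
    exact ((hA1o (eR r)).inter (hNxo (xI i)))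
  have hCXcov : (⋃ ri, CX ri) = univ := by
    rw [Set.eq_univ_iff_forall]
    intro x
    obtain ⟨r, hr⟩ := hArcov x
    obtain ⟨i, hi⟩ := hNxcov x
    exact mem_iUnion.2 ⟨(r, i), hr, hi⟩
  obtain ⟨WX, asgX, hWXo, hWXsub, hWXdisj, hWXdef⟩ := ostrand hX XI CX hCXo hCXcov k
  -- Y side
  set WT := ((i : Fin nX) × Fin (nT i)) with hWT
  set YI := (Fin nP × ((w : WT) → Fin (nB w.1 w.2))) with hYI
  set CY : YI → Set Y := fun pj =>
    Bp pj.1 ∩ ⋂ w : WT, Br (xI w.1) (τI w.1 w.2) (yB w.1 w.2 (pj.2 w)) with hCY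
  haveI : Nonempty YI := by
    refine ⟨⟨Classical.arbitrary _, fun w => Classical.arbitrary _⟩⟩
  have hCYo : ∀ pj, IsOpen (CY pj) := by
    rintro ⟨p, jf⟩
    exact (hB0o (eP p)).inter
      (isOpen_iInter_of_finite (fun w => hBro (xI w.1) (τI w.1 w.2) _))
  have hCYcov : (⋃ pj, CY pj) = univ := by
    rw [Set.eq_univ_iff_forall]
    intro y
    obtain ⟨p, hp⟩ := hBpcov y
    have hch : ∀ w : WT, ∃ j : Fin (nB w.1 w.2),
        y ∈ Br (xI w.1) (τI w.1 w.2) (yB w.1 w.2 j) := by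
      intro w
      obtain ⟨y', hy', hmem⟩ := mem_iUnion₂.1 (hGY (xI w.1) (τI w.1 w.2) (mem_univ y))
      refine ⟨(GY (xI w.1) (τI w.1 w.2)).equivFin ⟨y', hy'⟩, ?_⟩
      simpa [hyB] using hmem
    choose jf hjf using hch
    exact mem_iUnion.2 ⟨⟨p, jf⟩, hp, mem_iInter.2 hjf⟩
  obtain ⟨WY, asgY, hWYo, hWYsub, hWYdisj, hWYdef⟩ := ostrand hY YI CY hCYo hCYcov k
  -- ===== the grid width =====
  haveI : Nonempty WT := by
    obtain ⟨i⟩ := (inferInstance : Nonempty (Fin nX))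
    obtain ⟨t⟩ := hNEnT i
    exact ⟨⟨i, t⟩⟩
  set lam : ℝ := (Finset.univ.image (fun w : WT => εs (xI w.1) (τI w.1 w.2) / 2)).min'
    ((Finset.univ_nonempty).image _) with hlam
  have hlampos : 0 < lam := by
    rcases Finset.mem_image.1 ((Finset.univ.image
        (fun w : WT => εs (xI w.1) (τI w.1 w.2) / 2)).min'_mem ((Finset.univ_nonempty).image _))
      with ⟨w, -, hw⟩
    rw [hlam, ← hw]
    have := hεspos (xI w.1) (τI w.1 w.2)
    linarith
  have hlamle : ∀ w : WT, lam ≤ εs (xI w.1) (τI w.1 w.2) / 2 := by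
    intro w
    exact Finset.min'_le _ _ (Finset.mem_image_of_mem _ (Finset.mem_univ w))
  set ℓ : ℝ := min (min (δ0/2) (δ1/2)) lam with hℓ
  have hℓpos : 0 < ℓ := lt_min (lt_min (by linarith) (by linarith)) hlampos
  have hℓδ0 : ℓ ≤ δ0/2 := le_trans (min_le_left _ _) (min_le_left _ _)
  have hℓδ1 : ℓ ≤ δ1/2 := le_trans (min_le_left _ _) (min_le_right _ _)
  have hℓlam : ℓ ≤ lam := min_le_right _ _
  have hkpos : 0 < (k:ℝ) := by positivity
  set g : Fin k → ℤ → ℝ := fun c j => ((j : ℝ) + (c : ℕ) / k) * ℓ with hg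
  have hgsucc : ∀ c j, g c j = g c (j-1) + ℓ := by
    intro c j
    rw [hg]
    push_cast
    ring
  have hgmono : ∀ c, StrictMono (g c ·) := by
    intro c
    intro j j' hjj'
    rw [hg]
    simp only []
    apply mul_lt_mul_of_pos_right _ hℓpos
    have : (j:ℝ) < j' := by exact_mod_cast hjj'
    linarith
    -- ===== the colored sets on I × X × Y =====
  set XF : Fin k → ℤ → Set XI → Set X :=
    fun c j SX => if g c j ≤ δ0 then univ else WX c SX with hXF
  set YF : Fin k → ℤ → Set YI → Set Y :=
    fun c j SY => if (¬ g c j ≤ δ0) ∧ (1 - δ1 ≤ g c (j-1)) then univ else WY c SY with hYF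
  set sg : Fin k × ℤ × Set XI × Set YI → Set (I × X × Y) :=
    fun π => {p | g π.1 (π.2.1 - 1) < (p.1:ℝ) ∧ (p.1:ℝ) < g π.1 π.2.1 ∧
      p.2.1 ∈ XF π.1 π.2.1 π.2.2.1 ∧ p.2.2 ∈ YF π.1 π.2.1 π.2.2.2} with hsg
  have hXFo : ∀ c j SX, IsOpen (XF c j SX) := by
    intro c j SX
    simp only [hXF]
    split_ifs
    · exact isOpen_univ
    · exact hWXo c SX
  have hYFo : ∀ c j SY, IsOpen (YF c j SY) := by
    intro c j SY
    simp only [hYF]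
    split_ifs
    · exact isOpen_univ
    · exact hWYo c SY
  have hsgo : ∀ π, IsOpen (sg π) := by
    rintro ⟨c, j, SX, SY⟩
    have heq : sg (c, j, SX, SY) =
        ((fun p : I × X × Y => (p.1:ℝ)) ⁻¹' (Ioo (g c (j-1)) (g c j))) ∩
        ((fun p : I × X × Y => p.2.1) ⁻¹' XF c j SX) ∩
        ((fun p : I × X × Y => p.2.2) ⁻¹' YF c j SY) := by
      ext p
      simp only [hsg, mem_setOf_eq, mem_inter_iff, mem_preimage, mem_Ioo]
      tauto
    rw [heq]
    refine IsOpen.inter (IsOpen.inter ?_ ?_) ?_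
    · exact isOpen_Ioo.preimage (continuous_subtype_val.comp continuous_fst)
    · exact (hXFo c j SX).preimage (continuous_fst.comp continuous_snd)
    · exact (hYFo c j SY).preimage (continuous_snd.comp continuous_snd)
  -- saturation
  have hsat : ∀ π, JSat (sg π) := by
    rintro ⟨c, j, SX, SY⟩ p q hrel
    rcases hrel with ⟨hp1, hq1, hyy⟩ | ⟨hp1, hq1, hxx⟩
    · -- t = 0 on both sides
      have hmem0 : ∀ r : I × X × Y, r.1 = (0:I) →
          (r ∈ sg (c, j, SX, SY) ↔ (g c (j-1) < 0 ∧ 0 < g c j ∧ r.2.2 ∈ YF c j SY)) := by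
        intro r hr
        have hcoe : (r.1 : ℝ) = 0 := by rw [hr]; norm_num
        simp only [hsg, mem_setOf_eq, hcoe]
        constructor
        · rintro ⟨h1, h2, -, h4⟩
          exact ⟨h1, h2, h4⟩
        · rintro ⟨h1, h2, h4⟩
          refine ⟨h1, h2, ?_, h4⟩
          have htype : g c j ≤ δ0 := by
            have := hgsucc c j
            linarith [hℓδ0, hδ0pos]
          simp only [hXF]
          simp only [if_pos htype]
          trivial
      rw [hmem0 p hp1, hmem0 q hq1, hyy]
    · -- t = 1 on both sides
      have hmem1 : ∀ r : I × X × Y, r.1 = (1:I) →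
          (r ∈ sg (c, j, SX, SY) ↔ (g c (j-1) < 1 ∧ 1 < g c j ∧ r.2.1 ∈ XF c j SX)) := by
        intro r hr
        have hcoe : (r.1 : ℝ) = 1 := by rw [hr]; norm_num
        simp only [hsg, mem_setOf_eq, hcoe]
        constructor
        · rintro ⟨h1, h2, h3, -⟩
          exact ⟨h1, h2, h3⟩
        · rintro ⟨h1, h2, h3⟩
          refine ⟨h1, h2, h3, ?_⟩
          have htype : (¬ g c j ≤ δ0) ∧ (1 - δ1 ≤ g c (j-1)) := by
            constructor
            · push_neg
              linarith
            · have := hgsucc c j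
              linarith [hℓδ1]
          simp only [hYF]
          simp only [if_pos htype]
          trivial
      rw [hmem1 p hp1, hmem1 q hq1, hxx]
    -- ===== assignments =====
  have ex0 : ∀ (c : Fin k) (SY : Set YI), ∃ u, ∀ (j : ℤ) (SX : Set XI),
      g c j ≤ δ0 → sg (c, j, SX, SY) ⊆ O u := by
    intro c SY
    refine ⟨uE0 (eP (asgY c SY).1), ?_⟩
    intro j SX h0 p hp
    simp only [hsg, mem_setOf_eq] at hp
    apply hB0t (eP (asgY c SY).1)
    constructor
    · calc (p.1 : ℝ) < g c j := hp.2.1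
        _ ≤ δ0 := h0
        _ ≤ δE0 (eP (asgY c SY).1) := hδ0le _
    · have hy : p.2.2 ∈ WY c SY := by
        have := hp.2.2.2
        simp only [hYF, if_neg (by tauto : ¬((¬ g c j ≤ δ0) ∧ (1 - δ1 ≤ g c (j-1))))] at this
        exact this
      have := hWYsub c SY hy
      simp only [hCY] at this
      exact this.1
  have ex1 : ∀ (c : Fin k) (SX : Set XI), ∃ u, ∀ (j : ℤ) (SY : Set YI),
      ¬ g c j ≤ δ0 → 1 - δ1 ≤ g c (j-1) → sg (c, j, SX, SY) ⊆ O u := by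
    intro c SX
    refine ⟨uE1 (eR (asgX c SX).1), ?_⟩
    intro j SY h0 h1 p hp
    simp only [hsg, mem_setOf_eq] at hp
    apply hA1t (eR (asgX c SX).1)
    constructor
    · have : 1 - δE1 (eR (asgX c SX).1) ≤ 1 - δ1 := by linarith [hδ1le (asgX c SX).1]
      calc 1 - δE1 (eR (asgX c SX).1) ≤ 1 - δ1 := this
        _ ≤ g c (j-1) := h1
        _ < (p.1:ℝ) := hp.1
    · have hx : p.2.1 ∈ WX c SX := by
        have := hp.2.2.1
        simp only [hXF, if_neg h0] at this
        exact this
      have := hWXsub c SX hx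
      simp only [hCX] at this
      exact this.1
  have exm : ∀ (c : Fin k) (j : ℤ) (SX : Set XI) (SY : Set YI),
      ¬ g c j ≤ δ0 → ¬ 1 - δ1 ≤ g c (j-1) → ∃ u, sg (c, j, SX, SY) ⊆ O u := by
    intro c j SX SY h0 h1
    push_neg at h0 h1
    set i0 : Fin nX := (asgX c SX).2 with hi0
    have hmaxmin : max (g c (j-1)) 0 < min (g c j) 1 := by
      rw [max_lt_iff, lt_min_iff, lt_min_iff]
      refine ⟨⟨hgmono c (show (j-1:ℤ) < j by omega), by linarith⟩, ⟨by linarith, by norm_num⟩⟩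
    set t0 : ℝ := (max (g c (j-1)) 0 + min (g c j) 1) / 2 with ht0
    have h1t0 : max (g c (j-1)) 0 < t0 := by rw [ht0]; linarith
    have h2t0 : t0 < min (g c j) 1 := by rw [ht0]; linarith
    have ht00 : 0 ≤ t0 := le_of_lt (lt_of_le_of_lt (le_max_right _ _) h1t0)
    have ht01 : t0 ≤ 1 := le_of_lt (lt_of_lt_of_le h2t0 (min_le_right _ _))
    set t0I : I := ⟨t0, ht00, ht01⟩ with ht0I
    have ht0Z : t0I ∈ Zz := by
      simp only [hZz, mem_preimage, mem_Icc]
      constructor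
      · have hminδ : δ0 < min (g c j) 1 := lt_min h0 (by linarith)
        have := le_max_right (g c (j-1)) 0
        show δ0/2 ≤ t0
        rw [ht0]
        linarith [le_max_right (g c (j-1)) (0:ℝ)]
      · have hmaxδ : max (g c (j-1)) 0 < 1 - δ1 := by
          rw [max_lt_iff]
          exact ⟨h1, by linarith⟩
        show t0 ≤ 1 - δ1/2
        rw [ht0]
        have := min_le_right (g c j) (1:ℝ)
        linarith
    obtain ⟨ts, hts⟩ := hTcov i0 t0I ht0Z
    set w : WT := ⟨i0, ts⟩ with hw
    set jY := (asgY c SY).2 w with hjY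
    refine ⟨ur (xI i0) (τI i0 ts) (yB i0 ts jY), ?_⟩
    intro p hp
    simp only [hsg, mem_setOf_eq] at hp
    apply htube2 (xI i0) (τI i0 ts) (yB i0 ts jY) (hyBmem i0 ts jY)
    have hdist1 : dist p.1 t0I < ℓ := by
      rw [Subtype.dist_eq, Real.dist_eq, abs_sub_lt_iff]
      have hlen := hgsucc c j
      constructor
      · have : (p.1:ℝ) < g c j := hp.2.1
        have : g c (j-1) < t0 := lt_of_le_of_lt (le_max_left _ _) h1t0
        linarith
      · have : t0 < g c j := lt_of_lt_of_le h2t0 (min_le_left _ _)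
        have : g c (j-1) < (p.1:ℝ) := hp.1
        linarith
    refine ⟨?_, ?_, ?_⟩
    · have htri := dist_triangle p.1 t0I (τI i0 ts)
      have hle : ℓ ≤ εs (xI i0) (τI i0 ts) / 2 := le_trans hℓlam (hlamle w)
      have : dist t0I (τI i0 ts) < εs (xI i0) (τI i0 ts) / 2 := hts
      linarith
    · have hx : p.2.1 ∈ WX c SX := by
        have := hp.2.2.1
        simp only [hXF, if_neg (not_le.2 h0)] at this
        exact this
      have := hWXsub c SX hx
      simp only [hCX] at this
      have h2 := this.2
      simp only [hNx, mem_iInter] at h2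
      exact h2 (τI i0 ts) (hτImem i0 ts)
    · have hy : p.2.2 ∈ WY c SY := by
        have := hp.2.2.2
        simp only [hYF,
          if_neg (by push_neg; intro _; linarith :
            ¬((¬ g c j ≤ δ0) ∧ (1 - δ1 ≤ g c (j-1))))] at this
        exact this
      have := hWYsub c SY hy
      simp only [hCY] at this
      exact mem_iInter.1 this.2 w
  set asg : Fin k × ℤ × Set XI × Set YI → ι := fun π =>
    if h0 : g π.1 π.2.1 ≤ δ0 then (ex0 π.1 π.2.2.2).choose
    else if h1 : 1 - δ1 ≤ g π.1 (π.2.1 - 1) then (ex1 π.1 π.2.2.1).choose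
    else (exm π.1 π.2.1 π.2.2.1 π.2.2.2 h0 h1).choose with hasgdef
  have hasg : ∀ π, sg π ⊆ O (asg π) := by
    rintro ⟨c, j, SX, SY⟩
    by_cases h0 : g c j ≤ δ0
    · simp only [hasgdef, dif_pos h0]
      exact (ex0 c SY).choose_spec j SX h0
    · by_cases h1 : 1 - δ1 ≤ g c (j-1)
      · simp only [hasgdef, dif_neg h0, dif_pos h1]
        exact (ex1 c SX).choose_spec j SY h0 h1
      · simp only [hasgdef, dif_neg h0, dif_neg h1]
        exact (exm c j SX SY h0 h1).choose_spec
    -- ===== the final cover =====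
  set V : ι → Set (Join X Y) := fun u =>
    jq '' (⋃ π : {π : Fin k × ℤ × Set XI × Set YI // asg π = u}, sg π.1) with hV
  have hVsat : ∀ u, JSat (⋃ π : {π : Fin k × ℤ × Set XI × Set YI // asg π = u}, sg π.1) :=
    fun u => JSat.iUnion (fun π => hsat π.1)
  haveI : Nonempty (Fin k) := ⟨⟨0, by omega⟩⟩
  refine ⟨V, ?_, ?_, ?_, ?_⟩
  · -- openness
    intro u
    exact (hVsat u).isOpen_image (isOpen_iUnion fun π => hsgo π.1)
  · -- refinement
    intro u z hz
    simp only [hV] at hz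
    obtain ⟨p, hp, rfl⟩ := hz
    obtain ⟨⟨π, hπ⟩, hmem⟩ := mem_iUnion.1 hp
    have hO2 := hasg π hmem
    rw [hπ] at hO2
    simpa [hO] using hO2
  · -- coverage
    rw [Set.eq_univ_iff_forall]
    intro z
    induction z using Quot.ind with
    | _ ρ =>
    set MX : Set (Fin k) := {c | ∀ S, ρ.2.1 ∉ WX c S} with hMX
    set MY : Set (Fin k) := {c | ∀ S, ρ.2.2 ∉ WY c S} with hMY
    set MT : Set (Fin k) := {c | ∃ j : ℤ, (ρ.1:ℝ) = g c j} with hMT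
    have hMTcard : MT.ncard ≤ 1 := by
      rcases eq_empty_or_nonempty MT with h | ⟨c₀, hc₀⟩
      · simp [h]
      · have hsub : MT ⊆ {c₀} := by
          intro c hc
          obtain ⟨j, hj⟩ := hc
          obtain ⟨j₀, hj₀⟩ := hc₀
          have heq2 : ((j:ℝ) + (c:ℕ)/k) * ℓ = ((j₀:ℝ) + (c₀:ℕ)/k) * ℓ := by
            have e1 : (ρ.1:ℝ) = ((j:ℝ) + (c:ℕ)/k) * ℓ := by rw [hj, hg]
            have e2 : (ρ.1:ℝ) = ((j₀:ℝ) + (c₀:ℕ)/k) * ℓ := by rw [hj₀, hg]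
            rw [← e1, ← e2]
          have h2 : (j:ℝ) + (c:ℕ)/k = (j₀:ℝ) + (c₀:ℕ)/k :=
            mul_right_cancel₀ (ne_of_gt hℓpos) heq2
          have h3 : (j:ℝ)*k + (c:ℕ) = (j₀:ℝ)*k + (c₀:ℕ) := by
            have := congrArg (· * (k:ℝ)) h2
            field_simp at this
            linarith [this]
          have hck : ((c:ℕ):ℝ) < k := by exact_mod_cast c.2
          have hck0 : ((c₀:ℕ):ℝ) < k := by exact_mod_cast c₀.2
          have hcge : (0:ℝ) ≤ ((c:ℕ):ℝ) := by positivity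
          have hcge0 : (0:ℝ) ≤ ((c₀:ℕ):ℝ) := by positivity
          have hjj : j = j₀ := by
            by_contra hne
            rcases lt_or_gt_of_ne hne with h | h
            · have : (j:ℝ) + 1 ≤ j₀ := by exact_mod_cast h
              nlinarith
            · have : (j₀:ℝ) + 1 ≤ j := by exact_mod_cast h
              nlinarith
          have : ((c:ℕ):ℝ) = ((c₀:ℕ):ℝ) := by
            rw [hjj] at h3
            linarith
          have : (c:ℕ) = (c₀:ℕ) := by exact_mod_cast this
          simp [Fin.ext this]
        calc MT.ncard ≤ ({c₀} : Set (Fin k)).ncard :=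
              Set.ncard_le_ncard hsub (Set.toFinite _)
          _ = 1 := Set.ncard_singleton c₀
    have hU3 : (MX ∪ MY ∪ MT).ncard ≤ m + n + 1 := by
      calc (MX ∪ MY ∪ MT).ncard ≤ (MX ∪ MY).ncard + MT.ncard := Set.ncard_union_le _ _
        _ ≤ (MX.ncard + MY.ncard) + MT.ncard := by
            have := Set.ncard_union_le MX MY
            omega
        _ ≤ m + n + 1 := by
            have h1 : MX.ncard ≤ m := by rw [hMX]; exact hWXdef ρ.2.1
            have h2 : MY.ncard ≤ n := by rw [hMY]; exact hWYdef ρ.2.2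
            omega
    have hex : ∃ c : Fin k, c ∉ MX ∪ MY ∪ MT := by
      by_contra h
      push_neg at h
      have hsub : (univ : Set (Fin k)) ⊆ MX ∪ MY ∪ MT := fun c _ => h c
      have hcard := Set.ncard_le_ncard hsub (Set.toFinite _)
      rw [Set.ncard_univ, Nat.card_eq_fintype_card, Fintype.card_fin] at hcard
      omega
    obtain ⟨c, hc⟩ := hex
    simp only [mem_union, not_or] at hc
    obtain ⟨⟨hcX, hcY⟩, hcT⟩ := hc
    -- find the interval
    set av : ℝ := (ρ.1:ℝ)/ℓ - (c:ℕ)/k with hav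
    set j : ℤ := ⌈av⌉ with hjdef
    clear_value av j
    have hid : (av + (c:ℕ)/k) * ℓ = (ρ.1:ℝ) := by
      rw [hav]
      field_simp
      ring
    have hub : (ρ.1:ℝ) ≤ g c j := by
      have h1 : av ≤ ((j:ℤ):ℝ) := by rw [hjdef]; exact_mod_cast Int.le_ceil av
      have h2 : (av + (c:ℕ)/k) * ℓ ≤ ((j:ℝ) + (c:ℕ)/k) * ℓ := by
        apply mul_le_mul_of_nonneg_right _ (le_of_lt hℓpos)
        linarith
      rw [hid] at h2
      rw [hg]
      exact h2
    have hlb : g c (j-1) < (ρ.1:ℝ) := by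
      have h1 : ((j:ℤ):ℝ) < av + 1 := by rw [hjdef]; exact_mod_cast Int.ceil_lt_add_one av
      have hcast : (((j-1:ℤ)):ℝ) = ((j:ℤ):ℝ) - 1 := by push_cast; ring
      have h2 : (((j-1:ℤ)):ℝ) + (c:ℕ)/k < av + (c:ℕ)/k := by rw [hcast]; linarith
      have h3 : ((((j-1:ℤ)):ℝ) + (c:ℕ)/k) * ℓ < (av + (c:ℕ)/k) * ℓ :=
        mul_lt_mul_of_pos_right h2 hℓpos
      rw [hid] at h3
      rw [hg]
      exact h3
    have hstrict : (ρ.1:ℝ) < g c j := by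
      rcases lt_or_eq_of_le hub with h | h
      · exact h
      · exact absurd (⟨j, h⟩ : ∃ j' : ℤ, (ρ.1:ℝ) = g c j') (by simpa [hMT] using hcT)
    simp only [hMX, mem_setOf_eq] at hcX
    push_neg at hcX
    obtain ⟨SX, hSX⟩ := hcX
    simp only [hMY, mem_setOf_eq] at hcY
    push_neg at hcY
    obtain ⟨SY, hSY⟩ := hcY
    have hmem : ρ ∈ sg (c, j, SX, SY) := by
      simp only [hsg, mem_setOf_eq]
      refine ⟨hlb, hstrict, ?_, ?_⟩
      · simp only [hXF]
        split_ifs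
        · trivial
        · exact hSX
      · simp only [hYF]
        split_ifs
        · trivial
        · exact hSY
    refine mem_iUnion.2 ⟨asg (c, j, SX, SY), ?_⟩
    simp only [hV]
    exact mem_image_of_mem _ (mem_iUnion.2 ⟨⟨(c, j, SX, SY), rfl⟩, hmem⟩)
  · -- multiplicity
    intro z
    induction z using Quot.ind with
    | _ ρ =>
    have hrep : ∀ u, jq ρ ∈ V u →
        ∃ c j SX SY, asg (c, j, SX, SY) = u ∧ ρ ∈ sg (c, j, SX, SY) := by
      intro u hu
      simp only [hV] at hu
      obtain ⟨⟨⟨c, j, SX, SY⟩, hπ⟩, hmem⟩ := mem_iUnion.1 ((hVsat u).mem_image_iff.1 hu)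
      exact ⟨c, j, SX, SY, hπ, hmem⟩
    choose cf jf SXf SYf hasgf hmemf using hrep
    set f : ι → Fin k := fun u =>
      if hu : jq ρ ∈ V u then cf u hu else Classical.arbitrary (Fin k) with hf
    have hinj : Set.InjOn f {u | jq ρ ∈ V u} := by
      intro u hu u' hu' heq
      replace heq : cf u hu = cf u' hu' := by
        have e1 : f u = cf u hu := dif_pos hu
        have e2 : f u' = cf u' hu' := dif_pos hu'
        rw [e1, e2] at heq
        exact heq
      have hmem1 := hmemf u hu
      have hmem2 := hmemf u' hu'
      simp only [hsg, mem_setOf_eq] at hmem1 hmem2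
      rw [← heq] at hmem2
      have hj : jf u hu = jf u' hu' := by
        by_contra hne
        rcases lt_or_gt_of_ne hne with h | h
        · have hle : g (cf u hu) (jf u hu) ≤ g (cf u hu) (jf u' hu' - 1) :=
            (hgmono _).monotone (by omega)
          linarith [hmem1.2.1, hmem2.1]
        · have hle : g (cf u hu) (jf u' hu') ≤ g (cf u hu) (jf u hu - 1) :=
            (hgmono _).monotone (by omega)
          linarith [hmem2.2.1, hmem1.1]
      rw [← hj] at hmem2
      suffices hs : asg (cf u hu, jf u hu, SXf u hu, SYf u hu)
          = asg (cf u' hu', jf u' hu', SXf u' hu', SYf u' hu') by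
        rw [hasgf u hu, hasgf u' hu'] at hs
        exact hs
      rw [← heq, ← hj]
      by_cases h0 : g (cf u hu) (jf u hu) ≤ δ0
      · have hy1 : ρ.2.2 ∈ WY (cf u hu) (SYf u hu) := by
          have h4 := hmem1.2.2.2
          simp only [hYF, if_neg (show ¬((¬ g (cf u hu) (jf u hu) ≤ δ0) ∧
            (1 - δ1 ≤ g (cf u hu) (jf u hu - 1))) from fun hcond => hcond.1 h0)] at h4
          exact h4
        have hy2 : ρ.2.2 ∈ WY (cf u hu) (SYf u' hu') := by
          have h4 := hmem2.2.2.2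
          simp only [hYF, if_neg (show ¬((¬ g (cf u hu) (jf u hu) ≤ δ0) ∧
            (1 - δ1 ≤ g (cf u hu) (jf u hu - 1))) from fun hcond => hcond.1 h0)] at h4
          exact h4
        have hSY : SYf u hu = SYf u' hu' := by
          by_contra hne
          exact Set.disjoint_left.1 (hWYdisj (cf u hu) _ _ hne) hy1 hy2
        rw [← hSY]
        simp only [hasgdef]
        rw [dif_pos h0, dif_pos h0]
      · have hx1 : ρ.2.1 ∈ WX (cf u hu) (SXf u hu) := by
          have h4 := hmem1.2.2.1
          simp only [hXF, if_neg h0] at h4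
          exact h4
        have hx2 : ρ.2.1 ∈ WX (cf u hu) (SXf u' hu') := by
          have h4 := hmem2.2.2.1
          simp only [hXF, if_neg h0] at h4
          exact h4
        have hSX : SXf u hu = SXf u' hu' := by
          by_contra hne
          exact Set.disjoint_left.1 (hWXdisj (cf u hu) _ _ hne) hx1 hx2
        rw [← hSX]
        by_cases h1 : 1 - δ1 ≤ g (cf u hu) (jf u hu - 1)
        · simp only [hasgdef]
          rw [dif_neg h0, dif_neg h0, dif_pos h1, dif_pos h1]
        · have hy1 : ρ.2.2 ∈ WY (cf u hu) (SYf u hu) := by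
            have h4 := hmem1.2.2.2
            simp only [hYF, if_neg (show ¬((¬ g (cf u hu) (jf u hu) ≤ δ0) ∧
              (1 - δ1 ≤ g (cf u hu) (jf u hu - 1))) from fun hcond => h1 hcond.2)] at h4
            exact h4
          have hy2 : ρ.2.2 ∈ WY (cf u hu) (SYf u' hu') := by
            have h4 := hmem2.2.2.2
            simp only [hYF, if_neg (show ¬((¬ g (cf u hu) (jf u hu) ≤ δ0) ∧
              (1 - δ1 ≤ g (cf u hu) (jf u hu - 1))) from fun hcond => h1 hcond.2)] at h4
            exact h4
          have hSY : SYf u hu = SYf u' hu' := by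
            by_contra hne
            exact Set.disjoint_left.1 (hWYdisj (cf u hu) _ _ hne) hy1 hy2
          rw [← hSY]
    have hfin : {u | jq ρ ∈ V u}.Finite :=
      Set.Finite.of_finite_image (Set.toFinite _) hinj
    refine ⟨hfin, ?_⟩
    have hle := Set.ncard_le_ncard_of_injOn f (fun u _ => mem_univ (f u)) hinj
      (Set.toFinite _)
    rw [Set.ncard_univ, Nat.card_eq_fintype_card, Fintype.card_fin] at hle
    have hle2 : {i | Quot.mk (JoinRel X Y) ρ ∈ V i}.ncard ≤ k := hle
    omega
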